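/- Define δ(n) = 15/(ln n)^{1/4} and k₀(n) = 6n/(ln n)^{1/2}. For all sufficiently large n and every integer i with 5 ≤ i ≤ k₀(n), one has C(n,i) · C(n−i, 2i−1) · ((3i−2)/(δ(n)·n − 12))^{6i} ≤ (4⁵ · e³ · (i/n)³ · δ(n)^{−6})^{i}. -/

import Mathlib

open Real Filter Nat

/-- `δ(n) = 15 / (ln n)^{1/4}`. -/
noncomputable def deltaFn (n : ℕ) : ℝ := 15 / (Real.log n) ^ ((1 : ℝ) / 4)

/-- `k₀(n) = 6n / (ln n)^{1/2}`. -/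
noncomputable def kZero (n : ℕ) : ℝ := 6 * n / (Real.log n) ^ ((1 : ℝ) / 2)

set_option maxHeartbeats 1000000 in
lemma choose_le_exp_pow (m k : ℕ) (hk : 1 ≤ k) :
    (m.choose k : ℝ) ≤ (Real.exp 1 * m / k) ^ k := by
  have hk0 : (0:ℝ) < k := by exact_mod_cast hk
  have hf : (0:ℝ) < (k ! : ℝ) := by exact_mod_cast k.factorial_pos
  have h1 : (m.choose k : ℝ) ≤ ((m:ℝ)) ^ k / (k ! : ℝ) := by
    simpa using (Nat.choose_le_pow_div k m : (m.choose k : ℝ) ≤ _)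
  have h2 : ((k:ℝ)) ^ k / (k ! : ℝ) ≤ Real.exp k :=
    Real.pow_div_factorial_le_exp (x := (k:ℝ)) hk0.le k
  have h3 : ((k:ℝ)) ^ k ≤ Real.exp 1 ^ k * (k ! : ℝ) := by
    have := (div_le_iff₀ hf).mp h2
    rw [← Real.exp_nat_mul, mul_one]
    exact this
  refine h1.trans ?_
  rw [div_pow, mul_pow, div_le_div_iff₀ hf (by positivity)]
  calc (m:ℝ) ^ k * (k:ℝ) ^ k ≤ (m:ℝ) ^ k * (Real.exp 1 ^ k * (k ! : ℝ)) := by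
        exact mul_le_mul_of_nonneg_left h3 (by positivity)
    _ = Real.exp 1 ^ k * (m:ℝ) ^ k * (k ! : ℝ) := by ring

set_option maxHeartbeats 1000000 in
theorem stmt9 :
    ∀ᶠ n : ℕ in Filter.atTop, ∀ i : ℕ, 5 ≤ i → (i : ℝ) ≤ kZero n →
      (n.choose i : ℝ) * ((n - i).choose (2 * i - 1) : ℝ) *
          ((3 * (i : ℝ) - 2) / (deltaFn n * n - 12)) ^ (6 * i)
        ≤ (4 ^ 5 * Real.exp 1 ^ 3 * ((i : ℝ) / n) ^ 3 * deltaFn n ^ (-6 : ℤ)) ^ i := by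
  have hlog : ∀ᶠ n : ℕ in atTop, (36:ℝ) ≤ Real.log n :=
    (Real.tendsto_log_atTop.comp tendsto_natCast_atTop_atTop).eventually_ge_atTop 36
  filter_upwards [hlog, eventually_ge_atTop 81] with n hL36 hn81 i hi5 hik
  set L := Real.log n with hLdef
  have hL0 : (0:ℝ) < L := lt_of_lt_of_le (by norm_num) hL36
  have hnR : (81:ℝ) ≤ n := by exact_mod_cast hn81
  have hn0 : (0:ℝ) < n := by linarith
  have hiR : (5:ℝ) ≤ i := by exact_mod_cast hi5
  have hi0 : (0:ℝ) < i := by linarith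
  have hLn : L ≤ (n:ℝ) := by
    have := Real.log_le_sub_one_of_pos hn0
    linarith
  -- t = L^{1/4}
  set t := L ^ ((1:ℝ)/4) with htdef
  have ht0 : 0 < t := Real.rpow_pos_of_pos hL0 _
  have ht4 : t ^ (4:ℕ) = L := by
    rw [htdef, ← Real.rpow_natCast (L ^ ((1:ℝ)/4)) 4, ← Real.rpow_mul hL0.le]
    norm_num
  have hdelta : deltaFn n = 15 / t := rfl
  have hd0 : 0 < deltaFn n := by rw [hdelta]; positivity
  -- δ n * n ≥ 228
  have hdn : (228:ℝ) ≤ deltaFn n * n := by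
    rw [hdelta, div_mul_eq_mul_div, le_div_iff₀ ht0]
    nlinarith [sq_nonneg (t - 3), sq_nonneg (t^2 - 9), sq_nonneg t, ht0.le]
  -- s = sqrt L ≥ 6, hence i ≤ n
  have hs : (6:ℝ) ≤ L ^ ((1:ℝ)/2) := by
    set s := L ^ ((1:ℝ)/2) with hsdef
    have hs0 : 0 < s := Real.rpow_pos_of_pos hL0 _
    have hs2 : s ^ (2:ℕ) = L := by
      rw [hsdef, ← Real.rpow_natCast (L ^ ((1:ℝ)/2)) 2, ← Real.rpow_mul hL0.le]
      norm_num
    nlinarith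
  have hin : (i:ℝ) ≤ n := by
    have hs0 : (0:ℝ) < L ^ ((1:ℝ)/2) := Real.rpow_pos_of_pos hL0 _
    have : kZero n ≤ n := by
      rw [kZero, div_le_iff₀ hs0]
      nlinarith
    linarith
  have hinN : i ≤ n := by exact_mod_cast hin
  -- a = e n / i  and  c = 19 i / (6 δ n)
  set a := Real.exp 1 * (n:ℝ) / i with hadef
  set c := 19 * (i:ℝ) / (6 * (deltaFn n * n)) with hcdef
  have he1 : (1:ℝ) ≤ Real.exp 1 := by
    have := Real.add_one_le_exp (1:ℝ); linarith
  have ha1 : (1:ℝ) ≤ a := by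
    rw [hadef, le_div_iff₀ hi0]
    nlinarith
  have ha0 : 0 ≤ a := by linarith
  have hc0 : 0 ≤ c := by rw [hcdef]; positivity
  -- bound 1
  have hb1 : (n.choose i : ℝ) ≤ a ^ i := choose_le_exp_pow n i (by omega)
  -- bound 2
  have hb2 : ((n - i).choose (2 * i - 1) : ℝ) ≤ a ^ (2 * i) := by
    have h := choose_le_exp_pow (n - i) (2 * i - 1) (by omega)
    have hcast1 : (((n - i : ℕ)):ℝ) = (n:ℝ) - i := by
      push_cast [Nat.cast_sub hinN]; ring
    have hcast2 : (((2 * i - 1 : ℕ)):ℝ) = 2 * (i:ℝ) - 1 := by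
      have : (1:ℕ) ≤ 2 * i := by omega
      push_cast [Nat.cast_sub this]; ring
    rw [hcast1, hcast2] at h
    have hbase : Real.exp 1 * ((n:ℝ) - i) / (2 * (i:ℝ) - 1) ≤ a := by
      rw [hadef, div_le_div_iff₀ (by linarith) hi0]
      have h' : ((n:ℝ) - i) * i ≤ (n:ℝ) * (2 * (i:ℝ) - 1) := by nlinarith
      nlinarith [mul_le_mul_of_nonneg_left h' (Real.exp_pos 1).le]
    have hbase0 : 0 ≤ Real.exp 1 * ((n:ℝ) - i) / (2 * (i:ℝ) - 1) := by
      apply div_nonneg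
      · nlinarith
      · linarith
    calc ((n - i).choose (2 * i - 1) : ℝ)
        ≤ (Real.exp 1 * ((n:ℝ) - i) / (2 * (i:ℝ) - 1)) ^ (2 * i - 1) := h
      _ ≤ a ^ (2 * i - 1) := pow_le_pow_left₀ hbase0 hbase _
      _ ≤ a ^ (2 * i) := pow_le_pow_right₀ ha1 (by omega)
  -- bound 3
  have hb3 : ((3 * (i : ℝ) - 2) / (deltaFn n * n - 12)) ^ (6 * i) ≤ c ^ (6 * i) := by
    apply pow_le_pow_left₀
    · apply div_nonneg <;> linarith
    · rw [hcdef, div_le_div_iff₀ (by linarith) (by positivity)]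
      nlinarith
  have hq0 : (0:ℝ) ≤ (3 * (i : ℝ) - 2) / (deltaFn n * n - 12) := by
    apply div_nonneg <;> linarith
  -- combine
  have hprod : (n.choose i : ℝ) * ((n - i).choose (2 * i - 1) : ℝ) *
      ((3 * (i : ℝ) - 2) / (deltaFn n * n - 12)) ^ (6 * i)
      ≤ (a ^ 3 * c ^ 6) ^ i := by
    have heq : (a ^ 3 * c ^ 6) ^ i = a ^ i * a ^ (2 * i) * c ^ (6 * i) := by
      rw [mul_pow, ← pow_mul, ← pow_mul, show 3 * i = i + 2 * i by ring, pow_add]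
    rw [heq]
    apply mul_le_mul
    · exact mul_le_mul hb1 hb2 (by positivity) (by positivity)
    · exact hb3
    · positivity
    · positivity
  refine hprod.trans ?_
  apply pow_le_pow_left₀ (by positivity)
  -- base inequality
  have hzpow : deltaFn n ^ (-6 : ℤ) = (deltaFn n ^ (6:ℕ))⁻¹ := by
    rw [show ((-6 : ℤ)) = -((6:ℕ):ℤ) by norm_num, zpow_neg, zpow_natCast]
  rw [hzpow, hadef, hcdef]
  have he3 : Real.exp 1 ^ (3:ℕ) = Real.exp 3 := by
    rw [← Real.exp_nat_mul]; norm_num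
  have hA : (Real.exp 1 * (n:ℝ) / i) ^ 3 * (19 * (i:ℝ) / (6 * (deltaFn n * n))) ^ 6
      = (19^6 / 6^6 : ℝ) * (Real.exp 1 ^ 3 * (i:ℝ) ^ 3 / ((n:ℝ) ^ 3 * deltaFn n ^ 6)) := by
    field_simp
  have hB : (4:ℝ) ^ 5 * Real.exp 1 ^ 3 * ((i : ℝ) / n) ^ 3 * (deltaFn n ^ (6:ℕ))⁻¹
      = 1024 * (Real.exp 1 ^ 3 * (i:ℝ) ^ 3 / ((n:ℝ) ^ 3 * deltaFn n ^ 6)) := by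
    field_simp
    ring
  rw [hA, hB]
  have : (19^6 / 6^6 : ℝ) ≤ 1024 := by norm_num
  apply mul_le_mul_of_nonneg_right this (by positivity)
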